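/- Every finite supersolvable group admits a skew left brace structure of nilpotent type. -/

import Mathlib

universe u

def HasNilpotentBrace (G : Type u) [Group G] : Prop :=
  ∃ (A : Type u) (_ : Group A) (_ : Group.IsNilpotent A) (e : G ≃ A),
    ∀ a b c : G,
      a * e.symm (e b * e c) = e.symm (e (a * b) * (e a)⁻¹ * e (a * c))

theorem hasNilpotentBrace_of_nilpotent (G : Type u) [Group G] [hn : Group.IsNilpotent G] :
    HasNilpotentBrace G :=
  ⟨G, ‹_›, hn, Equiv.refl G, fun a b c => by simp; group⟩

theorem hasNilpotentBrace_step {G : Type u} [Group G] (N H : Subgroup G) [hNn : N.Normal]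
    (hc : N.IsComplement' H) (hN : Group.IsNilpotent ↥N)
    (hH : HasNilpotentBrace ↥H) : HasNilpotentBrace G := by
  obtain ⟨A, gA, nA, eH, hbr⟩ := hH
  haveI := hN
  haveI := nA
  let E : G ≃ ↥N × ↥H := hc.equiv
  have hsymm : ∀ (n : ↥N) (h : ↥H), E.symm (n, h) = (n : G) * h := fun n h => rfl
  have hEeq : ∀ (g : G) (n : ↥N) (h : ↥H), (n : G) * h = g → E g = (n, h) := by
    intro g n h hg
    rw [← hg, show ((n : G) * h) = E.symm (n, h) from rfl, E.apply_symm_apply]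
  refine ⟨↥N × A, inferInstance, inferInstance,
    E.trans ((Equiv.refl ↥N).prodCongr eH), fun a b c => ?_⟩
  set m : ↥N := (E a).1 with hm
  set k : ↥H := (E a).2 with hk
  set nb : ↥N := (E b).1 with hnb
  set hb : ↥H := (E b).2 with hhb
  set nc : ↥N := (E c).1 with hnc
  set hc' : ↥H := (E c).2 with hhc
  have ha : (m : G) * k = a := hc.equiv_fst_mul_equiv_snd a
  have hbdec : (nb : G) * hb = b := hc.equiv_fst_mul_equiv_snd b
  have hcdec : (nc : G) * hc' = c := hc.equiv_fst_mul_equiv_snd c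
  have hEa : E a = (m, k) := rfl
  have hEb : E b = (nb, hb) := rfl
  have hEc : E c = (nc, hc') := rfl
  set nb' : ↥N := ⟨(k : G) * nb * (k : G)⁻¹, hNn.conj_mem _ nb.2 _⟩ with hnb'
  set nc' : ↥N := ⟨(k : G) * nc * (k : G)⁻¹, hNn.conj_mem _ nc.2 _⟩ with hnc'
  have hEab : E (a * b) = (m * nb', k * hb) := by
    apply hEeq
    push_cast [hnb']
    rw [← ha, ← hbdec]
    group
  have hEac : E (a * c) = (m * nc', k * hc') := by
    apply hEeq
    push_cast [hnc']
    rw [← ha, ← hcdec]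
    group
  have key := hbr k hb hc'
  simp only [Equiv.trans_apply, Equiv.symm_trans_apply, Equiv.prodCongr_apply,
    Equiv.prodCongr_symm, Equiv.coe_refl, Prod.map_apply, id_eq, hEab, hEac, hEa, hEb, hEc,
    Prod.mk_mul_mk, Prod.inv_mk, Equiv.refl_symm, hsymm]
  rw [← key]
  push_cast [hnb', hnc']
  rw [← ha]
  group

/-- A group is supersolvable if it has a normal series (each term normal in the whole
group) with cyclic quotients; the quotient condition is expressed by a surjective
homomorphism onto a cyclic group `Multiplicative (ZMod m)` with kernel the previous
term. -/
def IsSupersolvableGroup (G : Type*) [Group G] : Prop :=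
  ∃ (n : ℕ) (s : Fin (n + 1) → Subgroup G),
    s 0 = ⊥ ∧ s (Fin.last n) = ⊤ ∧
    (∀ i : Fin n, s i.castSucc ≤ s i.succ) ∧
    (∀ i : Fin (n + 1), (s i).Normal) ∧
    (∀ i : Fin n, ∃ (m : ℕ) (f : ↥(s i.succ) →* Multiplicative (ZMod m)),
        Function.Surjective f ∧ f.ker = (s i.castSucc).subgroupOf (s i.succ))

theorem cyclicCond_of_isCyclic {K : Type*} [Group K] [Finite K] (L : Subgroup K) [L.Normal]
    (h : IsCyclic (K ⧸ L)) :
    ∃ (m : ℕ) (f : K →* Multiplicative (ZMod m)), Function.Surjective f ∧ f.ker = L := by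
  let q : K ⧸ L ≃* Multiplicative (ZMod (Nat.card (K ⧸ L))) := (zmodCyclicMulEquiv h).symm
  refine ⟨_, q.toMonoidHom.comp (QuotientGroup.mk' L), ?_, ?_⟩
  · exact q.surjective.comp (QuotientGroup.mk'_surjective L)
  · ext x
    simp [MonoidHom.mem_ker, EmbeddingLike.map_eq_one_iff, QuotientGroup.eq_one_iff]

theorem isCyclic_quotient_of_ker_eq {K M : Type*} [Group K] [Group M] [IsCyclic M]
    (f : K →* M) (L : Subgroup K) [L.Normal] (h : f.ker = L) : IsCyclic (K ⧸ L) := by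
  subst h
  exact isCyclic_of_surjective _ (QuotientGroup.quotientKerEquivRange f).symm.surjective

theorem exists_cyclic_normal {G : Type*} [Group G] [Finite G] (h : IsSupersolvableGroup G)
    (hG : Nat.card G ≠ 1) : ∃ N : Subgroup G, N.Normal ∧ IsCyclic ↥N ∧ N ≠ ⊥ := by
  obtain ⟨n, s, h0, htop, hmono, hnorm, hcyc⟩ := h
  classical
  have hne : s (Fin.last n) ≠ ⊥ := by
    rw [htop]
    intro hb
    apply hG
    rw [← Subgroup.card_top (G := G), hb]
    exact Subgroup.card_bot
  set S : Finset (Fin (n + 1)) := Finset.univ.filter (fun i => s i ≠ ⊥) with hS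
  have hSne : S.Nonempty := ⟨Fin.last n, by simp [hS, hne]⟩
  set i₁ := S.min' hSne with hi₁
  have hi₁mem : i₁ ∈ S := S.min'_mem hSne
  have hi₁ne : s i₁ ≠ ⊥ := by simpa [hS] using hi₁mem
  have hi₁0 : i₁ ≠ 0 := fun h => hi₁ne (h ▸ h0)
  obtain ⟨j, hj⟩ := Fin.exists_succ_eq.mpr hi₁0
  have hjcast : s j.castSucc = ⊥ := by
    by_contra hb
    have : j.castSucc ∈ S := by simp [hS, hb]
    have h1 : i₁ ≤ j.castSucc := S.min'_le _ this
    have h2 : j.castSucc < i₁ := by rw [← hj]; exact Fin.castSucc_lt_succ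
    exact absurd h1 (not_le.mpr h2)
  obtain ⟨m, f, hfs, hker⟩ := hcyc j
  have hkerbot : f.ker = ⊥ := by rw [hker, hjcast, Subgroup.bot_subgroupOf]
  have hinj : Function.Injective f := (MonoidHom.ker_eq_bot_iff f).mp hkerbot
  refine ⟨s j.succ, hnorm _, ?_, by rw [hj]; exact hi₁ne⟩
  exact isCyclic_of_surjective _ (MonoidHom.ofInjective hinj).symm.surjective

theorem isSupersolvable_subgroup {G : Type*} [Group G] [Finite G] (h : IsSupersolvableGroup G)
    (H : Subgroup G) : IsSupersolvableGroup ↥H := by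
  obtain ⟨n, s, h0, htop, hmono, hnorm, hcyc⟩ := h
  refine ⟨n, fun i => (s i).subgroupOf H,
    by show (s 0).subgroupOf H = ⊥; rw [h0]; exact Subgroup.bot_subgroupOf H,
    by show (s (Fin.last n)).subgroupOf H = ⊤; rw [htop]; exact Subgroup.top_subgroupOf H,
    ?_, ?_, ?_⟩
  · intro i
    show (s i.castSucc).subgroupOf H ≤ (s i.succ).subgroupOf H
    rw [← Subgroup.comap_subtype, ← Subgroup.comap_subtype]
    exact Subgroup.comap_mono (hmono i)
  · intro i
    haveI := hnorm i
    infer_instance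
  · intro i
    obtain ⟨m, f, hfs, hker⟩ := hcyc i
    let j : ↥((s i.succ).subgroupOf H) →* ↥(s i.succ) :=
      { toFun := fun x => ⟨(x : ↥H), x.2⟩, map_one' := rfl, map_mul' := fun _ _ => rfl }
    have hkerφ : (f.comp j).ker
        = ((s i.castSucc).subgroupOf H).subgroupOf ((s i.succ).subgroupOf H) := by
      ext x
      simp only [MonoidHom.mem_ker, MonoidHom.comp_apply, Subgroup.mem_subgroupOf]
      rw [show f (j x) = 1 ↔ j x ∈ f.ker from Iff.rfl, hker, Subgroup.mem_subgroupOf]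
      rfl
    haveI := hnorm i.castSucc
    haveI : (((s i.castSucc).subgroupOf H).subgroupOf ((s i.succ).subgroupOf H)).Normal := by
      infer_instance
    exact cyclicCond_of_isCyclic _ (isCyclic_quotient_of_ker_eq (f.comp j) _ hkerφ)

theorem isSupersolvable_of_surjective {G G' : Type*} [Group G] [Group G'] [Finite G]
    (π : G →* G') (hπ : Function.Surjective π) (h : IsSupersolvableGroup G) :
    IsSupersolvableGroup G' := by
  obtain ⟨n, s, h0, htop, hmono, hnorm, hcyc⟩ := h
  haveI : Finite G' := Finite.of_surjective π hπ
  refine ⟨n, fun i => (s i).map π,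
    by show (s 0).map π = ⊥; rw [h0]; exact Subgroup.map_bot π,
    by show (s (Fin.last n)).map π = ⊤; rw [htop]; exact Subgroup.map_top_of_surjective π hπ,
    fun i => Subgroup.map_mono (hmono i), fun i => (hnorm i).map π hπ, ?_⟩
  intro i
  obtain ⟨m, f, hfs, hker⟩ := hcyc i
  set L := ((s i.castSucc).map π).subgroupOf ((s i.succ).map π) with hL
  haveI : ((s i.castSucc).map π).Normal := (hnorm i.castSucc).map π hπ
  haveI : L.Normal := by rw [hL]; infer_instance
  let ψ := π.subgroupMap (s i.succ)
  have hψ : Function.Surjective ψ := π.subgroupMap_surjective (s i.succ)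
  let χ := (QuotientGroup.mk' L).comp ψ
  have hχ : Function.Surjective χ := (QuotientGroup.mk'_surjective L).comp hψ
  have hker_le : f.ker ≤ χ.ker := by
    intro x hx
    rw [hker, Subgroup.mem_subgroupOf] at hx
    show (QuotientGroup.mk' L) (ψ x) = 1
    rw [show ((QuotientGroup.mk' L) (ψ x) = 1) ↔ ψ x ∈ L from QuotientGroup.eq_one_iff _,
      hL, Subgroup.mem_subgroupOf]
    exact ⟨(x : G), hx, rfl⟩
  have hlift : Function.Surjective (QuotientGroup.lift f.ker χ hker_le) := by
    intro y
    obtain ⟨x, rfl⟩ := hχ y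
    exact ⟨QuotientGroup.mk x, rfl⟩
  haveI : IsCyclic (↥(s i.succ) ⧸ f.ker) :=
    isCyclic_of_surjective _ (QuotientGroup.quotientKerEquivOfSurjective f hfs).symm.surjective
  exact cyclicCond_of_isCyclic _ (isCyclic_of_surjective _ hlift)

theorem not_dvd_totient {p : ℕ} (hp : p.Prime) :
    ∀ m : ℕ, m ≠ 0 → (∀ q : ℕ, q.Prime → q ∣ m → q < p) → ¬ p ∣ m.totient := by
  intro m
  induction m using Nat.strong_induction_on with
  | _ m ih =>
    intro hm0 hq
    rcases eq_or_ne m 1 with rfl | hm1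
    · simpa using hp.one_lt.ne'
    have hq2 : m.minFac.Prime := Nat.minFac_prime hm1
    set q := m.minFac with hqdef
    set k := m.factorization q with hk
    have hk0 : 0 < k := hq2.factorization_pos_of_dvd hm0 (Nat.minFac_dvd m)
    have hdecomp : q ^ k * (m / q ^ k) = m := Nat.ordProj_mul_ordCompl_eq_self m q
    have hcop : Nat.Coprime (q ^ k) (m / q ^ k) :=
      Nat.Coprime.pow_left _ (Nat.coprime_ordCompl hq2 hm0)
    have hmul : m.totient = (q ^ k).totient * (m / q ^ k).totient := by
      conv_lhs => rw [← hdecomp]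
      rw [Nat.totient_mul hcop]
    rw [hmul]
    intro hdvd
    have hqlt : q < p := hq q hq2 (Nat.minFac_dvd m)
    rcases (Nat.Prime.dvd_mul hp).mp hdvd with h | h
    · rw [Nat.totient_prime_pow hq2 hk0] at h
      rcases (Nat.Prime.dvd_mul hp).mp h with h' | h'
      · have : p = q := (Nat.prime_dvd_prime_iff_eq hp hq2).mp (hp.dvd_of_dvd_pow h')
        omega
      · have h2 := hq2.two_le
        have := Nat.le_of_dvd (by omega) h'
        omega
    · have hlt : m / q ^ k < m :=
        Nat.div_lt_self (Nat.pos_of_ne_zero hm0) (Nat.one_lt_pow hk0.ne' hq2.one_lt)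
      exact ih (m / q ^ k) hlt (Nat.ordCompl_pos q hm0).ne'
        (fun r hr hrd => hq r hr (hrd.trans (Nat.ordCompl_dvd m q))) h

theorem exists_normal_sylow_aux :
    ∀ (n : ℕ) (G : Type u) (_inst1 : Group G) (_inst2 : Finite G), Nat.card G = n →
      IsSupersolvableGroup G → ∀ (p : ℕ), p.Prime →
      (∀ q : ℕ, q.Prime → q ∣ Nat.card G → q ≤ p) →
      ∃ P : Subgroup G, P.Normal ∧ IsPGroup p ↥P ∧ ¬ p ∣ P.index := by
  intro n
  induction n using Nat.strong_induction_on with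
  | _ n ih =>
    intro G _ _ hcard hss p hp hmax
    haveI : Fact p.Prime := ⟨hp⟩
    by_cases hpd : p ∣ Nat.card G
    case neg =>
      exact ⟨⊥, inferInstance, IsPGroup.of_bot, by rwa [Subgroup.index_bot]⟩
    have hcard1 : Nat.card G ≠ 1 := by
      intro h1
      rw [h1] at hpd
      exact hp.one_lt.ne' (Nat.eq_one_of_dvd_one hpd)
    obtain ⟨N, hNn, hNcyc, hNbot⟩ := exists_cyclic_normal hss hcard1
    haveI := hNn
    haveI := hNcyc
    have hNcard1 : Nat.card ↥N ≠ 1 := fun h1 => hNbot (Subgroup.card_eq_one.mp h1)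
    have hNcard0 : Nat.card ↥N ≠ 0 := Nat.card_pos.ne'
    by_cases hpN : p ∣ Nat.card ↥N
    · -- Case A : p divides |N|; split off the p-part of N and recurse on G ⧸ Q
      letI : CommGroup ↥N := IsCyclic.commGroup
      obtain ⟨P₀⟩ : Nonempty (Sylow p ↥N) := Sylow.nonempty
      haveI hP₀n : (P₀ : Subgroup ↥N).Normal := Subgroup.normal_of_comm _
      haveI hchar : (P₀ : Subgroup ↥N).Characteristic := Sylow.characteristic_of_normal P₀ hP₀n
      set Q : Subgroup G := (P₀ : Subgroup ↥N).map N.subtype with hQ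
      haveI hQn : Q.Normal := ConjAct.normal_of_characteristic_of_normal
      have hQp : IsPGroup p ↥Q := P₀.2.map N.subtype
      have hQcard : Nat.card ↥Q ≠ 1 := by
        have hcardeq : Nat.card ↥Q = Nat.card ↥(P₀ : Subgroup ↥N) :=
          (Nat.card_congr ((P₀ : Subgroup ↥N).equivMapOfInjective N.subtype
            N.subtype_injective).toEquiv).symm
        rw [hcardeq, P₀.card_eq_multiplicity]
        have hpos : 0 < (Nat.card ↥N).factorization p :=
          hp.factorization_pos_of_dvd hNcard0 hpN
        exact (Nat.one_lt_pow hpos.ne' hp.one_lt).ne'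
      have hssQ : IsSupersolvableGroup (G ⧸ Q) :=
        isSupersolvable_of_surjective (QuotientGroup.mk' Q) (QuotientGroup.mk'_surjective Q) hss
      have hquotdvd : Nat.card (G ⧸ Q) ∣ Nat.card G := by
        have h := Subgroup.index_dvd_card (H := Q)
        rwa [Subgroup.index_eq_card] at h
      have hcardlt : Nat.card (G ⧸ Q) < n := by
        rw [← hcard]
        have hprod := Subgroup.card_eq_card_quotient_mul_card_subgroup Q
        have h2 : 2 ≤ Nat.card ↥Q := by
          have := Nat.card_pos (α := ↥Q); omega
        have h0 : 0 < Nat.card (G ⧸ Q) := Nat.card_pos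
        nlinarith [hprod]
      obtain ⟨Pb, hPbn, hPbp, hPbi⟩ := ih _ hcardlt (G ⧸ Q) inferInstance (Finite.of_surjective _ (QuotientGroup.mk'_surjective Q)) rfl hssQ p hp
        (fun q hq hqd => hmax q hq (hqd.trans hquotdvd))
      refine ⟨Pb.comap (QuotientGroup.mk' Q), hPbn.comap _, ?_, ?_⟩
      · exact hPbp.comap_of_ker_isPGroup _ (by rw [QuotientGroup.ker_mk']; exact hQp)
      · rw [Subgroup.index_comap_of_surjective _ (QuotientGroup.mk'_surjective Q)]
        exact hPbi
    · -- Case B : p does not divide |N|; recurse on G ⧸ N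
      have hssN : IsSupersolvableGroup (G ⧸ N) :=
        isSupersolvable_of_surjective (QuotientGroup.mk' N) (QuotientGroup.mk'_surjective N) hss
      have hquotdvd : Nat.card (G ⧸ N) ∣ Nat.card G := by
        have h := Subgroup.index_dvd_card (H := N)
        rwa [Subgroup.index_eq_card] at h
      have hcardlt : Nat.card (G ⧸ N) < n := by
        rw [← hcard]
        have hprod := Subgroup.card_eq_card_quotient_mul_card_subgroup N
        have h2 : 2 ≤ Nat.card ↥N := by
          have := Nat.card_pos (α := ↥N); omega
        have h0 : 0 < Nat.card (G ⧸ N) := Nat.card_pos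
        nlinarith [hprod]
      obtain ⟨Pb, hPbn, hPbp, hPbi⟩ := ih _ hcardlt (G ⧸ N) inferInstance (Finite.of_surjective _ (QuotientGroup.mk'_surjective N)) rfl hssN p hp
        (fun q hq hqd => hmax q hq (hqd.trans hquotdvd))
      set π := QuotientGroup.mk' N with hπ
      set K : Subgroup G := Pb.comap π with hK
      haveI hKn : K.Normal := hPbn.comap π
      have hNK : N ≤ K := by
        intro x hx
        rw [hK, Subgroup.mem_comap]
        have : π x = 1 := (QuotientGroup.eq_one_iff x).mpr hx
        rw [this]; exact one_mem _
      set N' : Subgroup ↥K := N.subgroupOf K with hN'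
      haveI hN'n : N'.Normal := by rw [hN']; infer_instance
      haveI hN'cyc : IsCyclic ↥N' :=
        isCyclic_of_surjective _ (Subgroup.subgroupOfEquivOfLe hNK).symm.surjective
      have hcardN' : Nat.card ↥N' = Nat.card ↥N :=
        Nat.card_congr (Subgroup.subgroupOfEquivOfLe hNK).toEquiv
      -- K ⧸ N' is a p-group
      have hKNp : IsPGroup p (↥K ⧸ N') := by
        intro x
        obtain ⟨y, rfl⟩ := QuotientGroup.mk_surjective x
        have hy : π (y : G) ∈ Pb := y.2
        obtain ⟨t, ht⟩ := hPbp ⟨π (y : G), hy⟩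
        refine ⟨t, ?_⟩
        rw [← QuotientGroup.mk_pow, QuotientGroup.eq_one_iff]
        rw [hN', Subgroup.mem_subgroupOf]
        have hcoe : ((y ^ p ^ t : ↥K) : G) = (y : G) ^ p ^ t := rfl
        rw [hcoe, ← QuotientGroup.eq_one_iff (G := G) (N := N)]
        have : π ((y : G) ^ p ^ t) = π (y : G) ^ p ^ t := map_pow π _ _
        have h1 : (⟨π (y : G), hy⟩ : ↥Pb) ^ p ^ t = 1 := ht
        have h2 : (π (y : G)) ^ p ^ t = 1 := by
          have := congrArg (Subtype.val) h1
          simpa using this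
        rw [← hπ] at *
        exact this.trans h2
      obtain ⟨P₀⟩ : Nonempty (Sylow p ↥K) := Sylow.nonempty
      -- conjugation action of K on N' is trivial on P₀
      have hAut : Nat.card (MulAut ↥N') = (Nat.card ↥N').totient := IsCyclic.card_mulAut ↥N'
      haveI : Finite (MulAut ↥N') := Nat.finite_of_card_ne_zero (by
        rw [hAut]; exact (Nat.totient_pos.mpr Nat.card_pos).ne')
      have hpAut : ¬ p ∣ Nat.card (MulAut ↥N') := by
        rw [hAut, hcardN']
        refine not_dvd_totient hp _ hNcard0 (fun q hq hqd => ?_)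
        have hle : q ≤ p := hmax q hq (hqd.trans (Subgroup.card_subgroup_dvd_card N))
        have hne : q ≠ p := fun h => hpN (h ▸ hqd)
        omega
      set φ : ↥K →* MulAut ↥N' := MulAut.conjNormal with hφ
      have hcent : ∀ x : ↥K, x ∈ (P₀ : Subgroup ↥K) → φ x = 1 := by
        intro x hx
        have himg : IsPGroup p ↥((P₀ : Subgroup ↥K).map φ) := P₀.2.map φ
        obtain ⟨t, ht⟩ := himg.exists_card_eq
        have hdvd : Nat.card ↥((P₀ : Subgroup ↥K).map φ) ∣ Nat.card (MulAut ↥N') :=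
          Subgroup.card_subgroup_dvd_card _
        have ht0 : t = 0 := by
          by_contra h0
          exact hpAut ((dvd_pow_self p h0).trans (ht ▸ hdvd))
        have hbot : (P₀ : Subgroup ↥K).map φ = ⊥ :=
          Subgroup.card_eq_one.mp (by rw [ht, ht0, pow_zero])
        have := hbot ▸ Subgroup.mem_map_of_mem φ hx
        simpa [Subgroup.mem_bot] using this
      have hcomm : ∀ x : ↥K, x ∈ (P₀ : Subgroup ↥K) → ∀ m : ↥K, m ∈ N' →
          x * m * x⁻¹ = m := by
        intro x hx m hm
        have h1 : φ x = 1 := hcent x hx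
        have h2 : MulAut.conjNormal x (⟨m, hm⟩ : ↥N') = ⟨m, hm⟩ := by
          rw [← hφ, h1]; rfl
        have := congrArg Subtype.val h2
        simpa using this
      -- p does not divide the index of P₀
      have hpP₀ : ¬ p ∣ (P₀ : Subgroup ↥K).index := by
        intro hdvd
        have hcardP₀ := P₀.card_eq_multiplicity
        have hmi := Subgroup.card_mul_index (P₀ : Subgroup ↥K)
        refine Nat.pow_succ_factorization_not_dvd (Nat.card_pos (α := ↥K)).ne' hp ?_
        calc p ^ ((Nat.card ↥K).factorization p + 1)
            = Nat.card ↥(P₀ : Subgroup ↥K) * p := by rw [pow_succ, hcardP₀]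
          _ ∣ Nat.card ↥(P₀ : Subgroup ↥K) * (P₀ : Subgroup ↥K).index :=
              mul_dvd_mul dvd_rfl hdvd
          _ = Nat.card ↥K := hmi
      -- N' ⊔ P₀ = ⊤
      have hsup : N' ⊔ (P₀ : Subgroup ↥K) = ⊤ := by
        rw [← Subgroup.index_eq_one]
        have h1 : (N' ⊔ (P₀ : Subgroup ↥K)).index ∣ N'.index :=
          Subgroup.index_dvd_of_le le_sup_left
        have h2 : (N' ⊔ (P₀ : Subgroup ↥K)).index ∣ (P₀ : Subgroup ↥K).index :=
          Subgroup.index_dvd_of_le le_sup_right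
        obtain ⟨spow, hspow⟩ := hKNp.exists_card_eq
        have h1' : (N' ⊔ (P₀ : Subgroup ↥K)).index ∣ p ^ spow := by
          rw [← hspow, ← Subgroup.index_eq_card]; exact h1
        obtain ⟨j, hjle, hj⟩ := (Nat.dvd_prime_pow hp).mp h1'
        have hj0 : j = 0 := by
          by_contra h0
          exact hpP₀ ((dvd_pow_self p h0).trans (hj ▸ h2))
        rw [hj, hj0, pow_zero]
      have hP₀norm : (P₀ : Subgroup ↥K).Normal := by
        rw [← Subgroup.normalizer_eq_top_iff, eq_top_iff, ← hsup]
        refine sup_le ?_ Subgroup.le_normalizer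
        intro x hxN'
        rw [Subgroup.mem_normalizer_iff]
        intro y
        constructor
        · intro hy
          have := hcomm y hy x hxN'
          have hxy : x * y * x⁻¹ = y := by
            have h' : y * x = x * y := by
              calc y * x = (y * x * y⁻¹) * y := by group
              _ = x * y := by rw [this]
            calc x * y * x⁻¹ = y * x * x⁻¹ := by rw [h']
            _ = y := by group
          rwa [hxy]
        · intro hy
          have := hcomm _ hy x hxN'
          have hxy : x⁻¹ * (x * y * x⁻¹) * x = x * y * x⁻¹ := by
            have h' : (x * y * x⁻¹) * x = x * (x * y * x⁻¹) := by
              calc (x * y * x⁻¹) * x = ((x * y * x⁻¹) * x * (x * y * x⁻¹)⁻¹) * (x * y * x⁻¹) := by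
                    group
              _ = x * (x * y * x⁻¹) := by rw [this]
            calc x⁻¹ * (x * y * x⁻¹) * x = x⁻¹ * ((x * y * x⁻¹) * x) := by group
            _ = x⁻¹ * (x * (x * y * x⁻¹)) := by rw [h']
            _ = x * y * x⁻¹ := by group
          have : y = x * y * x⁻¹ := by
            calc y = x⁻¹ * (x * y * x⁻¹) * x := by group
            _ = x * y * x⁻¹ := hxy
          rwa [this]
      haveI := hP₀norm
      haveI hchar : (P₀ : Subgroup ↥K).Characteristic :=
        Sylow.characteristic_of_normal P₀ hP₀norm
      refine ⟨(P₀ : Subgroup ↥K).map K.subtype, ConjAct.normal_of_characteristic_of_normal,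
        P₀.2.map _, ?_⟩
      rw [Subgroup.index_map_subtype]
      intro hdvd
      rcases (Nat.Prime.dvd_mul hp).mp hdvd with h | h
      · exact hpP₀ h
      · rw [hK, Subgroup.index_comap_of_surjective _ (QuotientGroup.mk'_surjective N)] at h
        exact hPbi h

theorem hasNilpotentBrace_of_supersolvable_aux :
    ∀ (n : ℕ) (G : Type u) (_inst1 : Group G) (_inst2 : Finite G), Nat.card G = n →
      IsSupersolvableGroup G → HasNilpotentBrace G := by
  intro n
  induction n using Nat.strong_induction_on with
  | _ n ih =>
    intro G instG instF hcard hss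
    by_cases hcard1 : Nat.card G = 1
    case pos =>
      obtain ⟨_⟩ := Nat.card_eq_one_iff_unique.mp hcard1
      exact hasNilpotentBrace_of_nilpotent G
    -- largest prime divisor
    have hcard0 : Nat.card G ≠ 0 := Nat.card_pos.ne'
    obtain ⟨q₀, hq₀, hq₀d⟩ := Nat.exists_prime_and_dvd hcard1
    have hSne : (Nat.card G).primeFactors.Nonempty :=
      ⟨q₀, Nat.mem_primeFactors.mpr ⟨hq₀, hq₀d, hcard0⟩⟩
    set p := (Nat.card G).primeFactors.max' hSne with hpdef
    have hpmem := (Nat.card G).primeFactors.max'_mem hSne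
    rw [Nat.mem_primeFactors] at hpmem
    obtain ⟨hp, hpd, -⟩ := hpmem
    haveI : Fact p.Prime := ⟨hp⟩
    have hmax : ∀ r : ℕ, r.Prime → r ∣ Nat.card G → r ≤ p := fun r hr hrd =>
      Finset.le_max' _ r (Nat.mem_primeFactors.mpr ⟨hr, hrd, hcard0⟩)
    obtain ⟨P, hPn, hPp, hPi⟩ :=
      exists_normal_sylow_aux (Nat.card G) G instG instF rfl hss p hp hmax
    haveI := hPn
    obtain ⟨k, hk⟩ := hPp.exists_card_eq
    have hcop : Nat.Coprime (Nat.card ↥P) P.index := by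
      rw [hk]
      exact Nat.Coprime.pow_left _ (hp.coprime_iff_not_dvd.mpr hPi)
    obtain ⟨K, hc⟩ := Subgroup.exists_right_complement'_of_coprime hcop
    have hPcard : p ∣ Nat.card ↥P := by
      have hmi := Subgroup.card_mul_index P
      have hpd' : p ∣ Nat.card ↥P * P.index := by rw [hmi]; exact hpd
      rcases (Nat.Prime.dvd_mul hp).mp hpd' with h | h
      · exact h
      · exact absurd h hPi
    have hP2 : 2 ≤ Nat.card ↥P := le_trans hp.two_le (Nat.le_of_dvd Nat.card_pos hPcard)
    have hKlt : Nat.card ↥K < n := by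
      rw [← hcard]
      have hprod := hc.card_mul
      have h0 : 0 < Nat.card ↥K := Nat.card_pos
      nlinarith [hprod]
    have hssK : IsSupersolvableGroup ↥K := isSupersolvable_subgroup hss K
    have hbrK : HasNilpotentBrace ↥K := ih _ hKlt ↥K inferInstance inferInstance rfl hssK
    exact hasNilpotentBrace_step P K hc hPp.isNilpotent hbrK

/-- Every finite supersolvable group admits a skew left brace structure of nilpotent
type: there is a group operation `+` on `G` with `(G,+)` nilpotent (encoded by a
nilpotent group `A` and a bijection `e : G ≃ A` transporting the operation) such that
`a(b+c) = ab - a + ac` for all `a, b, c ∈ G`. -/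
theorem stmt14 {G : Type u} [Group G] [Finite G] (h : IsSupersolvableGroup G) :
    ∃ (A : Type u) (_ : Group A) (_ : Group.IsNilpotent A) (e : G ≃ A),
      ∀ a b c : G,
        a * e.symm (e b * e c) = e.symm (e (a * b) * (e a)⁻¹ * e (a * c)) := by
  exact hasNilpotentBrace_of_supersolvable_aux (Nat.card G) G ‹_› ‹_› rfl h
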